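/- Let n ≥ 1, let B be an n×n real symmetric positive-definite matrix, and let s, y ∈ ℝⁿ with s ≠ 0 and sᵀ y > 0. Then the BFGS update B⁺ = B − (B s)(B s)ᵀ/(sᵀ B s) + y yᵀ/(sᵀ y) is again symmetric positive definite. -/

import Mathlib

open scoped RealInnerProductSpace
open Matrix

private lemma vecMulVec_mulVec' {n : ℕ} (w v x : Fin n → ℝ) :
    (vecMulVec w v) *ᵥ x = (v ⬝ᵥ x) • w := by
  funext i
  simp [vecMulVec_apply, mulVec, dotProduct, Finset.mul_sum, mul_assoc, mul_comm, mul_left_comm]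

/-- **Positive definiteness of the BFGS update.** For an `n × n` real symmetric
positive-definite matrix `B` and vectors `s, y ∈ ℝⁿ` with `s ≠ 0` and `sᵀ y > 0`,
the BFGS update `B⁺ = B − (B s)(B s)ᵀ/(sᵀ B s) + y yᵀ/(sᵀ y)` is again symmetric
positive definite. -/
theorem bfgs_posDef_update (n : ℕ) (hn : 1 ≤ n)
    (B : Matrix (Fin n) (Fin n) ℝ) (hB : B.PosDef)
    (s y : EuclideanSpace ℝ (Fin n))
    (hs : s ≠ 0) (hsy : 0 < ⟪s, y⟫)
    (Bplus : Matrix (Fin n) (Fin n) ℝ)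
    (hBplus : Bplus =
      B - (⟪s, Matrix.toEuclideanLin B s⟫)⁻¹ •
            Matrix.vecMulVec (Matrix.toEuclideanLin B s) (Matrix.toEuclideanLin B s)
        + (⟪s, y⟫)⁻¹ • Matrix.vecMulVec y y) :
    Bplus.PosDef := by
  -- pass to plain vectors
  set s' : Fin n → ℝ := (WithLp.equiv 2 (Fin n → ℝ)) s with hs'
  set y' : Fin n → ℝ := (WithLp.equiv 2 (Fin n → ℝ)) y with hy'
  have hs0 : s' ≠ 0 := fun h => hs (by ext i; exact congrFun h i)
  have hinner : ∀ u v : EuclideanSpace ℝ (Fin n), ⟪u, v⟫ = u.ofLp ⬝ᵥ v.ofLp := fun u v => by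
    rw [EuclideanSpace.inner_eq_star_dotProduct, star_trivial, dotProduct_comm]
  have hc : 0 < s' ⬝ᵥ y' := by rw [hinner] at hsy; exact hsy
  have hc' : s' ⬝ᵥ y' ≠ 0 := ne_of_gt hc
  have hBsym : ∀ u v : Fin n → ℝ, u ⬝ᵥ B *ᵥ v = v ⬝ᵥ B *ᵥ u := by
    intro u v
    have hBt : Bᵀ = B := by
      have h := hB.1
      ext i j
      have := congrFun (congrFun h i) j
      simpa [Matrix.conjTranspose_apply] using this
    rw [Matrix.dotProduct_mulVec, ← Matrix.mulVec_transpose, hBt, dotProduct_comm]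
  have hq : ∀ u : Fin n → ℝ, u ≠ 0 → 0 < u ⬝ᵥ B *ᵥ u := by
    intro u hu
    simpa using hB.dotProduct_mulVec_pos hu
  have hq0 : ∀ u : Fin n → ℝ, 0 ≤ u ⬝ᵥ B *ᵥ u := by
    intro u
    by_cases hu : u = 0
    · simp [hu]
    · exact le_of_lt (hq u hu)
  have ha : 0 < s' ⬝ᵥ B *ᵥ s' := hq s' hs0
  have ha' : s' ⬝ᵥ B *ᵥ s' ≠ 0 := ne_of_gt ha
  have hBplus' : Bplus = B - (s' ⬝ᵥ B *ᵥ s')⁻¹ • vecMulVec (B *ᵥ s') (B *ᵥ s')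
      + (s' ⬝ᵥ y')⁻¹ • vecMulVec y' y' := by rw [hBplus, hinner, hinner]; rfl
  refine Matrix.PosDef.of_dotProduct_mulVec_pos ?_ ?_
  · -- Hermitian
    rw [hBplus']
    ext i j
    simp only [Matrix.conjTranspose_apply, Matrix.add_apply, Matrix.sub_apply,
      Matrix.smul_apply, vecMulVec_apply, star_trivial, smul_eq_mul]
    have hBij : B j i = B i j := by
      have h := hB.1
      have := congrFun (congrFun h i) j
      simpa [Matrix.conjTranspose_apply] using this
    rw [hBij]; ring
  · -- positivity
    intro x hx
    have key : ∀ u v : Fin n → ℝ, u ⬝ᵥ (Bplus *ᵥ v) =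
        u ⬝ᵥ B *ᵥ v - (s' ⬝ᵥ B *ᵥ s')⁻¹ * ((s' ⬝ᵥ B *ᵥ u) * (s' ⬝ᵥ B *ᵥ v))
          + (s' ⬝ᵥ y')⁻¹ * ((y' ⬝ᵥ u) * (y' ⬝ᵥ v)) := by
      intro u v
      rw [hBplus']
      rw [Matrix.add_mulVec, Matrix.sub_mulVec, Matrix.smul_mulVec,
        Matrix.smul_mulVec, vecMulVec_mulVec', vecMulVec_mulVec',
        dotProduct_add, dotProduct_sub]
      have h1 : (B *ᵥ s') ⬝ᵥ u = s' ⬝ᵥ B *ᵥ u := by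
        rw [dotProduct_comm, Matrix.dotProduct_mulVec, ← Matrix.mulVec_transpose]
        rw [hBsym]
        rw [Matrix.dotProduct_mulVec, ← Matrix.mulVec_transpose]
      have h2 : (B *ᵥ s') ⬝ᵥ v = s' ⬝ᵥ B *ᵥ v := by
        rw [dotProduct_comm, Matrix.dotProduct_mulVec, ← Matrix.mulVec_transpose]
        rw [hBsym]
        rw [Matrix.dotProduct_mulVec, ← Matrix.mulVec_transpose]
      simp only [dotProduct_smul, smul_eq_mul, smul_smul]
      rw [h2, hBsym u s', dotProduct_comm u y']
      ring
    set a := s' ⬝ᵥ B *ᵥ s' with haa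
    set t := s' ⬝ᵥ B *ᵥ x with htt
    set w : Fin n → ℝ := x - (t / a) • s' with hw
    have hqw : w ⬝ᵥ B *ᵥ w = x ⬝ᵥ B *ᵥ x - t ^ 2 / a := by
      rw [hw]
      simp only [Matrix.mulVec_sub, Matrix.mulVec_smul, sub_dotProduct,
        dotProduct_sub, smul_dotProduct, dotProduct_smul,
        smul_eq_mul, hBsym x s', ← haa, ← htt]
      field_simp
      ring
    have hval : star x ⬝ᵥ Bplus *ᵥ x =
        w ⬝ᵥ B *ᵥ w + (s' ⬝ᵥ y')⁻¹ * (y' ⬝ᵥ x) ^ 2 := by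
      rw [star_trivial, key x x, hqw, ← htt]
      field_simp
    rw [hval]
    by_cases hyx : y' ⬝ᵥ x = 0
    · have hw0 : w ≠ 0 := by
        intro h
        have hxw : x = (t / a) • s' := by rwa [hw, sub_eq_zero] at h
        have hyx' : y' ⬝ᵥ x = (t / a) * (y' ⬝ᵥ s') := by
          rw [hxw, dotProduct_smul, smul_eq_mul]
        rw [hyx, dotProduct_comm y' s'] at hyx'
        have hta : t / a = 0 := by
          rcases mul_eq_zero.mp hyx'.symm with h' | h'
          · exact h'
          · exact absurd h' hc'
        rw [hta, zero_smul] at hxw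
        exact hx hxw
      rw [hyx]
      simpa using hq w hw0
    · have h1 : 0 ≤ w ⬝ᵥ B *ᵥ w := hq0 w
      have h2 : 0 < (s' ⬝ᵥ y')⁻¹ * (y' ⬝ᵥ x) ^ 2 :=
        by positivity
      linarith
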